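/- Let k ≥ 1 be an integer, n ≥ k+2, and π = (d_1 ≤ ... ≤ d_n) a graphical sequence. Suppose: (i) for every integer i with k ≤ i < (n+k−1)/2, d_i ≥ i−k+2 or d_{n−i+k−1} ≥ n−i; and (ii) for every integer i with 1 ≤ i ≤ n/2, d_i ≥ i or d_n ≥ n−i. Then every realization of π is 1/k-tough. -/

import Mathlib

open SimpleGraph

/-- Number of connected components of `G` after deleting the vertex set `X`. -/
noncomputable def delComp {V : Type*} (G : SimpleGraph V) (X : Set V) : ℕ :=
  Nat.card ((G.induce Xᶜ).ConnectedComponent)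

/-- `G` is `t`-tough. -/
def IsTough {V : Type*} [Fintype V] (t : ℝ) (G : SimpleGraph V) : Prop :=
  ∀ X : Finset V, 1 < delComp G ↑X → t * delComp G ↑X ≤ X.card

/-- Degree of a vertex. -/
noncomputable def ndeg {V : Type*} (G : SimpleGraph V) (v : V) : ℕ :=
  Nat.card {u | G.Adj v u}

/-- `G` is a realization of the sequence `d 1, …, d n` (1-based indexing). -/
def Realizes {V : Type*} (n : ℕ) (G : SimpleGraph V) (d : ℕ → ℕ) : Prop :=
  ∃ e : Fin n ≃ V, ∀ i : Fin n, ndeg G (e i) = d (i.1 + 1)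

lemma exists_min_subset {α : Type*} [Fintype α] [DecidableEq α] (f : α → ℕ) :
    ∀ p : ℕ, p ≤ Fintype.card α → ∃ P : Finset α, P.card = p ∧ ∀ C ∈ P, ∀ D ∉ P, f C ≤ f D := by
  intro p
  induction p with
  | zero => exact fun _ => ⟨∅, rfl, by simp⟩
  | succ q ih =>
    intro hq
    obtain ⟨P, hPc, hPmin⟩ := ih (le_trans (Nat.le_succ q) hq)
    have hne : (Pᶜ : Finset α).Nonempty := by
      rw [← Finset.card_pos, Finset.card_compl, hPc]; omega
    obtain ⟨D₀, hD₀, hmin⟩ := Finset.exists_min_image Pᶜ f hne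
    have hD₀P : D₀ ∉ P := Finset.mem_compl.mp hD₀
    refine ⟨insert D₀ P, ?_, ?_⟩
    · rw [Finset.card_insert_of_notMem hD₀P, hPc]
    · intro C hC D hD
      have hDP : D ∉ P := fun h => hD (Finset.mem_insert_of_mem h)
      rcases Finset.mem_insert.mp hC with rfl | hCP
      · exact hmin D (Finset.mem_compl.mpr hDP)
      · exact hPmin C hCP D hDP

lemma deg_bound {V : Type*} [Fintype V] (G : SimpleGraph V) (X : Finset V)
    (v : ↥((↑X : Set V)ᶜ)) :
    ndeg G ↑v + 1 ≤
      Nat.card ((G.induce ((↑X : Set V)ᶜ)).connectedComponentMk v).supp + X.card := by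
  classical
  set H := G.induce ((↑X : Set V)ᶜ) with hH
  set C := H.connectedComponentMk v with hC
  have hsub : {u | G.Adj ↑v u} ⊆ (↑X : Set V) ∪ (Subtype.val '' (C.supp \ {v})) := by
    intro u hu
    by_cases hx : u ∈ (↑X : Set V)
    · exact Or.inl hx
    · right
      have hu' : u ∈ ((↑X : Set V)ᶜ) := hx
      refine ⟨⟨u, hu'⟩, ⟨?_, ?_⟩, rfl⟩
      · rw [SimpleGraph.ConnectedComponent.mem_supp_iff, hC]
        apply SimpleGraph.ConnectedComponent.sound
        apply SimpleGraph.Adj.reachable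
        exact ((hu : G.Adj ↑v u).symm : H.Adj ⟨u, hu'⟩ v)
      · intro hvv
        have heq0 : (⟨u, hu'⟩ : ↥((↑X : Set V)ᶜ)) = v := Set.mem_singleton_iff.mp hvv
        have heq : u = ↑v := congrArg Subtype.val heq0
        exact G.irrefl (heq ▸ hu)
  have hvC : v ∈ C.supp := by rw [SimpleGraph.ConnectedComponent.mem_supp_iff]
  have h1 : ndeg G ↑v = {u | G.Adj ↑v u}.ncard := Nat.card_coe_set_eq _
  have h2 : {u | G.Adj ↑v u}.ncard ≤ (↑X : Set V).ncard + (Subtype.val '' (C.supp \ {v})).ncard :=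
    le_trans (Set.ncard_le_ncard hsub (Set.toFinite _)) (Set.ncard_union_le _ _)
  have h3 : (Subtype.val '' (C.supp \ {v})).ncard = (C.supp \ {v}).ncard :=
    Set.ncard_image_of_injective _ Subtype.val_injective
  have h4 : (C.supp \ {v}).ncard + 1 = C.supp.ncard :=
    Set.ncard_diff_singleton_add_one hvC (Set.toFinite _)
  have h5 : Nat.card C.supp = C.supp.ncard := Nat.card_coe_set_eq _
  have h6 : (↑X : Set V).ncard = X.card := Set.ncard_coe_finset _
  omega

lemma extract_aux {V : Type*} [Fintype V] [DecidableEq V] {n : ℕ} (G : SimpleGraph V) (d : ℕ → ℕ)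
    (e : Fin n ≃ V) (he : ∀ i : Fin n, ndeg G (e i) = d (i.1 + 1))
    (hmono : ∀ i j : ℕ, 1 ≤ i → i ≤ j → j ≤ n → d i ≤ d j)
    (S : Finset V) (D m : ℕ) (h1 : 1 ≤ m) (hm : m ≤ S.card)
    (hS : ∀ v ∈ S, ndeg G v ≤ D) : d m ≤ D := by
  classical
  set T : Finset (Fin n) := S.image e.symm with hT
  have hTc : T.card = S.card := Finset.card_image_of_injective _ e.symm.injective
  have hex : ∃ i ∈ T, m ≤ i.1 + 1 := by
    by_contra h
    push_neg at h
    have hcard : T.card ≤ (Finset.range (m - 1)).card := by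
      apply Finset.card_le_card_of_injOn Fin.val
      · intro i hi
        have := h i hi
        simp only [Finset.mem_coe, Finset.mem_range]
        omega
      · exact fun a _ b _ hab => Fin.val_injective hab
    rw [Finset.card_range] at hcard
    omega
  obtain ⟨i, hiT, him⟩ := hex
  obtain ⟨v, hvS, hvi⟩ := Finset.mem_image.mp hiT
  have h2 : d m ≤ d (i.1 + 1) := hmono m (i.1 + 1) h1 him (by have := i.isLt; omega)
  have h3 : d (i.1 + 1) = ndeg G v := by
    rw [← he i, ← hvi, Equiv.apply_symm_apply]
  rw [h3] at h2
  exact le_trans h2 (hS v hvS)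

theorem stmt14 (k : ℕ) (hk : 1 ≤ k) (n : ℕ) (hn : k + 2 ≤ n)
    (d : ℕ → ℕ)
    (hmono : ∀ i j : ℕ, 1 ≤ i → i ≤ j → j ≤ n → d i ≤ d j)
    (hgraph : ∃ G : SimpleGraph (Fin n), Realizes n G d)
    (hi : ∀ i : ℕ, k ≤ i → 2 * i < n + k - 1 →
      i - k + 2 ≤ d i ∨ n - i ≤ d (n - i + k - 1))
    (hii : ∀ i : ℕ, 1 ≤ i → 2 * i ≤ n → i ≤ d i ∨ n - i ≤ d n) :
    ∀ G : SimpleGraph (Fin n), Realizes n G d → IsTough (1 / (k : ℝ)) G := by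
  intro G hre X hcomp
  classical
  obtain ⟨e, he⟩ := hre
  suffices hnat : delComp G ↑X ≤ k * X.card by
    have hk0 : (0:ℝ) < (k:ℝ) := by exact_mod_cast Nat.lt_of_lt_of_le Nat.zero_lt_one hk
    have h1 : (delComp G ↑X : ℝ) ≤ (k : ℝ) * (X.card : ℝ) := by exact_mod_cast hnat
    rw [div_mul_eq_mul_div, one_mul, div_le_iff₀ hk0]
    linarith
  by_contra hcon
  push_neg at hcon
  set s := X.card with hs
  set c := delComp G ↑X with hc
  set K : Set (Fin n) := (↑X : Set (Fin n))ᶜ with hK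
  set H : SimpleGraph ↥K := G.induce K with hH
  haveI : Fintype ↥K := Fintype.ofFinite _
  haveI : Fintype H.ConnectedComponent := Fintype.ofFinite _
  set mk : ↥K → H.ConnectedComponent := H.connectedComponentMk with hmk
  set sz : H.ConnectedComponent → ℕ := fun C => Nat.card C.supp with hsz
  have hceq : c = Nat.card H.ConnectedComponent := hc
  have hNF : Nat.card H.ConnectedComponent = Fintype.card H.ConnectedComponent :=
    Nat.card_eq_fintype_card
  have hc2 : 2 ≤ Fintype.card H.ConnectedComponent := by rw [← hNF, ← hceq]; omega
  haveI hΓne : Nonempty H.ConnectedComponent := Fintype.card_pos_iff.mp (by omega)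
  obtain ⟨Cany⟩ := id hΓne
  have hfib : ∀ C : H.ConnectedComponent,
      sz C = (Finset.univ.filter (fun w : ↥K => mk w = C)).card := by
    intro C
    have hsupp : C.supp = ↑(Finset.univ.filter (fun w : ↥K => mk w = C)) := by
      ext w
      simp [SimpleGraph.ConnectedComponent.mem_supp_iff, hmk]
    simp only [hsz]
    rw [Nat.card_coe_set_eq, hsupp, Set.ncard_coe_finset]
  have hsz1 : ∀ C, 1 ≤ sz C := by
    intro C
    obtain ⟨w, hw⟩ := C.exists_rep
    rw [hfib C]
    exact Finset.card_pos.mpr ⟨w, Finset.mem_filter.mpr ⟨Finset.mem_univ _, hw⟩⟩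
  have hXn : s ≤ n := by
    rw [hs]
    calc X.card ≤ Fintype.card (Fin n) := Finset.card_le_univ X
      _ = n := Fintype.card_fin n
  have hKcard : Fintype.card ↥K = n - s := by
    have h1 : K = ↑(Xᶜ) := by ext u; simp [hK]
    rw [← Nat.card_eq_fintype_card, h1, Nat.card_coe_set_eq, Set.ncard_coe_finset,
        Finset.card_compl, Fintype.card_fin]
  have hsum : ∑ C : H.ConnectedComponent, sz C = n - s := by
    calc ∑ C : H.ConnectedComponent, sz C
        = ∑ C : H.ConnectedComponent, (Finset.univ.filter (fun w : ↥K => mk w = C)).card :=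
          Finset.sum_congr rfl (fun C _ => hfib C)
      _ = (Finset.univ : Finset ↥K).card :=
          (Finset.card_eq_sum_card_fiberwise (fun x _ => Finset.mem_univ (mk x))).symm
      _ = n - s := by rw [Finset.card_univ, hKcard]
  have hSP : ∀ P : Finset H.ConnectedComponent,
      ((Finset.univ.filter (fun w : ↥K => mk w ∈ P)).image Subtype.val).card
        = ∑ C ∈ P, sz C := by
    intro P
    rw [Finset.card_image_of_injective _ Subtype.val_injective]
    rw [Finset.card_eq_sum_card_fiberwise (f := mk) (t := P)
      (s := Finset.univ.filter (fun w : ↥K => mk w ∈ P))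
      (fun x hx => (Finset.mem_filter.mp (Finset.mem_coe.mp hx)).2)]
    refine Finset.sum_congr rfl (fun C hC => ?_)
    rw [hfib C]
    congr 1
    ext w
    simp only [Finset.mem_filter, Finset.mem_univ, true_and]
    exact ⟨fun h => h.2, fun h => ⟨h ▸ hC, h⟩⟩
  have hdeg : ∀ w : ↥K, ndeg G ↑w + 1 ≤ sz (mk w) + s := fun w => deg_bound G X w
  have dbound : ∀ (P : Finset H.ConnectedComponent) (M m : ℕ),
      (∀ C ∈ P, sz C ≤ M) → 1 ≤ m → m ≤ ∑ C ∈ P, sz C → d m + 1 ≤ M + s := by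
    intro P M m hM h1 hm
    have hPne : P.Nonempty := by
      rcases P.eq_empty_or_nonempty with rfl | h
      · simp at hm; omega
      · exact h
    obtain ⟨C, hC⟩ := hPne
    have hM1 : 1 ≤ M := le_trans (hsz1 C) (hM C hC)
    have hle : d m ≤ M + s - 1 := by
      apply extract_aux G d e he hmono
        ((Finset.univ.filter (fun w : ↥K => mk w ∈ P)).image Subtype.val) (M + s - 1) m h1
      · rw [hSP P]; exact hm
      · intro v hv
        obtain ⟨w, hw, rfl⟩ := Finset.mem_image.mp hv
        have hwP : mk w ∈ P := (Finset.mem_filter.mp hw).2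
        have h₁ := hdeg w
        have h₂ := hM _ hwP
        omega
    omega
  have dboundAll : ∀ (M m : ℕ), (∀ C, sz C ≤ M) → 1 ≤ m → m + s ≤ n → d m + 1 ≤ M + s := by
    intro M m hM h1 hm
    have hM1 : 1 ≤ M := le_trans (hsz1 Cany) (hM Cany)
    have hle : d m ≤ M + s - 1 := by
      apply extract_aux G d e he hmono Xᶜ (M + s - 1) m h1
      · rw [Finset.card_compl, Fintype.card_fin]; omega
      · intro v hv
        have hvK : v ∈ K := by
          rw [hK]
          simp only [Set.mem_compl_iff, Finset.mem_coe]
          exact Finset.mem_compl.mp hv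
        have h₁ : ndeg G v + 1 ≤ sz (mk ⟨v, hvK⟩) + s := hdeg ⟨v, hvK⟩
        have h₂ := hM (mk ⟨v, hvK⟩)
        omega
    omega
  have hcard_le_sum : ∀ Q : Finset H.ConnectedComponent, Q.card ≤ ∑ C ∈ Q, sz C := by
    intro Q
    calc Q.card = ∑ _C ∈ Q, 1 := by rw [Finset.sum_const, smul_eq_mul, mul_one]
      _ ≤ ∑ C ∈ Q, sz C := Finset.sum_le_sum (fun C _ => hsz1 C)
  rcases Nat.eq_zero_or_pos s with hs0 | hs1
  · -- s = 0 : the graph is disconnected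
    obtain ⟨C₀, _, hC₀min⟩ := Finset.exists_min_image Finset.univ sz Finset.univ_nonempty
    obtain ⟨C₁, hC₁⟩ := Fintype.exists_ne_of_one_lt_card (by omega) C₀
    have hpair : sz C₀ + sz C₁ ≤ n - s := by
      have h1 : ∑ C ∈ ({C₀, C₁} : Finset H.ConnectedComponent), sz C
          ≤ ∑ C : H.ConnectedComponent, sz C :=
        Finset.sum_le_sum_of_subset (Finset.subset_univ _)
      rw [Finset.sum_pair (Ne.symm hC₁)] at h1
      omega
    have hmin1 : sz C₀ ≤ sz C₁ := hC₀min C₁ (Finset.mem_univ _)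
    have h2m : 2 * sz C₀ ≤ n := by omega
    have hm1 : 1 ≤ sz C₀ := hsz1 C₀
    rcases hii (sz C₀) hm1 h2m with hA | hB
    · have := dbound {C₀} (sz C₀) (sz C₀)
        (fun C hC => le_of_eq (congrArg sz (Finset.mem_singleton.mp hC)))
        hm1 (by rw [Finset.sum_singleton])
      omega
    · have hMall : ∀ C, sz C ≤ n - s - sz C₀ := by
        intro C
        by_cases hCC : C = C₀
        · rw [hCC]; omega
        · have h1 : ∑ D ∈ ({C₀, C} : Finset H.ConnectedComponent), sz D
              ≤ ∑ D : H.ConnectedComponent, sz D :=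
            Finset.sum_le_sum_of_subset (Finset.subset_univ _)
          rw [Finset.sum_pair (Ne.symm hCC)] at h1
          omega
      have := dboundAll (n - s - sz C₀) n hMall (by omega) (by omega)
      omega
  · -- s ≥ 1
    set p := s + k - 1 with hp
    have hks : k + s ≤ k * s + 1 := by
      have h1 : s - 1 ≤ k * (s - 1) := by
        calc s - 1 = 1 * (s - 1) := (one_mul _).symm
          _ ≤ k * (s - 1) := Nat.mul_le_mul_right _ hk
      have h2 : k * s = k * (s - 1) + k := by
        have hss : s - 1 + 1 = s := by omega
        calc k * s = k * ((s - 1) + 1) := by rw [hss]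
          _ = k * (s - 1) + k := by ring
      omega
    have hpc : p + 1 ≤ Fintype.card H.ConnectedComponent := by rw [← hNF, ← hceq]; omega
    obtain ⟨P, hPcard, hPmin⟩ := exists_min_subset sz p (by omega)
    set i := ∑ C ∈ P, sz C with hidef
    set T := ∑ C ∈ Pᶜ, sz C with hTdef
    have hiT : i + T + s = n := by
      have h1 := Finset.sum_compl_add_sum P sz
      omega
    have hPne : P.Nonempty := Finset.card_pos.mp (by omega)
    obtain ⟨C₀, hC₀P, hC₀max⟩ := Finset.exists_max_image P sz hPne
    set np := sz C₀ with hnpdef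
    have hnp1 : 1 ≤ np := hsz1 C₀
    have hi_lb : p - 1 + np ≤ i := by
      have h1 := Finset.sum_erase_add P sz hC₀P
      have h2 := hcard_le_sum (P.erase C₀)
      rw [Finset.card_erase_of_mem hC₀P, hPcard] at h2
      omega
    have hip : p ≤ i := by have := hcard_le_sum P; omega
    have hTc : Fintype.card H.ConnectedComponent - p ≤ T := by
      have h1 := hcard_le_sum Pᶜ
      rw [Finset.card_compl, hPcard] at h1
      exact h1
    have hcne : (Pᶜ : Finset H.ConnectedComponent).Nonempty :=
      Finset.card_pos.mp (by rw [Finset.card_compl, hPcard]; omega)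
    obtain ⟨D₀, hD₀⟩ := hcne
    have hnpT : np ≤ T := by
      have h1 : np ≤ sz D₀ := hPmin C₀ hC₀P D₀ (Finset.mem_compl.mp hD₀)
      have h2 : sz D₀ ≤ T := Finset.single_le_sum (fun C _ => Nat.zero_le _) hD₀
      omega
    have hszT : ∀ C, sz C ≤ T := by
      intro C
      by_cases hC : C ∈ P
      · exact le_trans (hC₀max C hC) hnpT
      · exact Finset.single_le_sum (fun C _ => Nat.zero_le _) (Finset.mem_compl.mpr hC)
    have hT1 : 1 ≤ T := by omega
    have db1 : ∀ m, 1 ≤ m → m ≤ i → d m + 1 ≤ np + s :=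
      fun m h1 h2 => dbound P np m (fun C hC => hC₀max C hC) h1 h2
    have db2 : ∀ m, 1 ≤ m → m + s ≤ n → d m + 1 ≤ T + s :=
      fun m h1 h2 => dboundAll T m hszT h1 h2
    have hin : i + 2 ≤ n := by omega
    have hki : k ≤ i := by omega
    have hBC : n + k - 1 ≤ 2 * i → p + np ≤ i := by
      intro h
      by_contra hcc
      push_neg at hcc
      omega
    rcases lt_trichotomy (2 * i) (n + k - 1) with hA | hE | hB
    · rcases hi i hki hA with h | h
      · have := db1 i (by omega) (le_refl i)
        omega
      · have := db2 (n - i + k - 1) (by omega) (by omega)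
        omega
    · have hnpi := hBC (by omega)
      rcases hi (i - 1) (by omega) (by omega) with h | h
      · have := db1 (i - 1) (by omega) (by omega)
        omega
      · have hidx : n - (i - 1) + k - 1 = i + 1 := by omega
        rw [hidx] at h
        have := db2 (i + 1) (by omega) (by omega)
        omega
    · have hnpi := hBC (by omega)
      rcases hi (n - i + k - 1) (by omega) (by omega) with h | h
      · have := db2 (n - i + k - 1) (by omega) (by omega)
        omega
      · have hidx : n - (n - i + k - 1) + k - 1 = i := by omega
        rw [hidx] at h
        have := db1 i (by omega) (le_refl i)
        omega
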